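/- Let R be a Noetherian local-like ring in the following sense: R is an integral domain, and every finitely generated ideal I of R which is stable under a group G of ring automorphisms and nonzero equals R. Let M be a finite free R-module of rank r with a φ-semilinear endomorphism φ_M (φ : R → R an injective endomorphism) commuting with a semilinear G-action, such that the linearization R ⊗_{φ,R} M → M is injective. If additionally every finite R-module with injective linearization is projective, and finite projective R-modules are free, then det(φ_M) generates a G-stable ideal, hence is a unit, hence M is an étale φ-module (linearization is an isomorphism). -/

import Mathlib

open TensorProduct

/-- Type synonym: `M` with the `R`-module structure twisted by `φ` (i.e. `r • m = φ r • m`).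
For `M = R` this is "`R` viewed as an `R`-module via `φ`". -/
@[nolint unusedArguments]
def Twist (R : Type*) [CommRing R] (φ : R →+* R) (M : Type*) [AddCommGroup M] [Module R M] :
    Type _ := M

namespace Twist

variable {R : Type*} [CommRing R] (φ : R →+* R) {M : Type*} [AddCommGroup M] [Module R M]

instance : AddCommGroup (Twist R φ M) := inferInstanceAs (AddCommGroup M)

instance : Module R (Twist R φ M) := Module.compHom M φ

theorem smul_def (r : R) (m : M) :
    (r • (show Twist R φ M from m)) = (show Twist R φ M from (φ r • m)) := rfl

end Twist

/-- The linearization `R ⊗_{φ,R} M → M`, `x ⊗ m ↦ x • φM m`, of a `φ`-semilinear map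
`φM : M → M`.  It is `R`-linear when the left tensor factor and the target carry the
`φ`-twisted module structures.  An étale `φ`-module is a finite module `M` for which this
map is bijective. -/
noncomputable def linearization {R : Type*} [CommRing R] (φ : R →+* R)
    {M : Type*} [AddCommGroup M] [Module R M] (φM : M →ₛₗ[φ] M) :
    TensorProduct R (Twist R φ R) M →ₗ[R] Twist R φ M :=
  TensorProduct.lift
    { toFun := fun x =>
        { toFun := fun m => show Twist R φ M from (show R from x) • φM m
          map_add' := fun a b => by
            show ((show R from x) • φM (a + b) : M) = (show R from x) • φM a + (show R from x) • φM b
            rw [map_add]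
            exact smul_add _ _ _
          map_smul' := fun r m => by
            show ((show R from x) • φM (r • m) : M) = φ r • ((show R from x) • φM m)
            rw [LinearMap.map_smulₛₗ, smul_comm] }
      map_add' := fun x y => by
        ext m
        show ((show R from x) + (show R from y)) • φM m = (show R from x) • φM m + (show R from y) • φM m
        exact add_smul _ _ _
      map_smul' := fun r x => by
        ext m
        show (φ r * (show R from x)) • φM m = (φ r • ((show R from x) • φM m) : M)
        exact mul_smul _ _ _ }


/-- Coordinate functional on the twisted tensor product, used to detect nonzero elements. -/
noncomputable def coordLin {R : Type*} [CommRing R] (φ : R →+* R)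
    {M : Type*} [AddCommGroup M] [Module R M] {r : ℕ} (b : Module.Basis (Fin r) R M) (j : Fin r) :
    TensorProduct R (Twist R φ R) M →ₗ[R] Twist R φ R :=
  TensorProduct.lift
    { toFun := fun a =>
        { toFun := fun m => show Twist R φ R from (show R from a) * φ (b.repr m j)
          map_add' := fun m m' => by
            show (show R from a) * φ (b.repr (m + m') j)
              = (show R from a) * φ (b.repr m j) + (show R from a) * φ (b.repr m' j)
            simp only [map_add, Finsupp.add_apply]
            exact mul_add _ _ _
          map_smul' := fun s m => by
            show (show R from a) * φ (b.repr (s • m) j)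
              = φ s * ((show R from a) * φ (b.repr m j))
            simp only [map_smul, Finsupp.smul_apply, smul_eq_mul, map_mul]
            exact mul_left_comm _ _ _ }
      map_add' := fun a a' => by
        ext m
        show ((show R from a) + (show R from a')) * φ (b.repr m j)
          = (show R from a) * φ (b.repr m j) + (show R from a') * φ (b.repr m j)
        ring
      map_smul' := fun s a => by
        ext m
        show (φ s * (show R from a)) * φ (b.repr m j)
          = φ s * ((show R from a) * φ (b.repr m j))
        ring }

theorem coordLin_tmul {R : Type*} [CommRing R] (φ : R →+* R)
    {M : Type*} [AddCommGroup M] [Module R M] {r : ℕ} (b : Module.Basis (Fin r) R M) (j : Fin r)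
    (a : R) (m : M) :
    (coordLin φ b j ((show Twist R φ R from a) ⊗ₜ[R] m) : R) = a * φ (b.repr m j) := rfl

/-- Let `R` be an integral domain on which a group `G` acts by ring
automorphisms such that every nonzero finitely generated `G`-stable ideal equals `R`.  Let
`M` be finite free of rank `r` with a `φ`-semilinear endomorphism `φM` (with `φ` injective,
commuting with the `G`-action) and a compatible semilinear `G`-action, such that the
linearization `R ⊗_{φ,R} M → M` is injective.  If moreover every finite `R`-module with
injective linearization is projective and finite projective `R`-modules are free, then the
ideal generated by `det φM` is `G`-stable, `det φM` is a unit, and `M` is étale (the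
linearization is bijective). -/
theorem statement_10 {R : Type*} [CommRing R] [IsDomain R]
    {G : Type*} [Group G] [MulSemiringAction G R]
    (hGideal : ∀ I : Ideal R, I.FG → (∀ g : G, ∀ x ∈ I, g • x ∈ I) → I ≠ ⊥ → I = ⊤)
    (φ : R →+* R) (hφinj : Function.Injective φ)
    (hφG : ∀ (g : G) (x : R), φ (g • x) = g • φ x)
    {M : Type*} [AddCommGroup M] [Module R M]
    {r : ℕ} (b : Module.Basis (Fin r) R M)
    (φM : M →ₛₗ[φ] M)
    [DistribMulAction G M]
    (hsemi : ∀ (g : G) (x : R) (m : M), g • (x • m) = (g • x) • (g • m))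
    (hcomm : ∀ (g : G) (m : M), φM (g • m) = g • φM m)
    (hinj : Function.Injective (linearization φ φM))
    (hproj : ∀ (N : Type _) [AddCommGroup N] [Module R N], Module.Finite R N →
      ∀ ψ : N →ₛₗ[φ] N, Function.Injective (linearization φ ψ) → Module.Projective R N)
    (hfree : ∀ (N : Type _) [AddCommGroup N] [Module R N], Module.Finite R N →
      Module.Projective R N → Module.Free R N) :
    (∀ g : G, ∀ x ∈ Ideal.span {(Matrix.of fun i j => b.repr (φM (b j)) i).det},
        g • x ∈ Ideal.span {(Matrix.of fun i j => b.repr (φM (b j)) i).det}) ∧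
    IsUnit (Matrix.of fun i j => b.repr (φM (b j)) i).det ∧
    Function.Bijective (linearization φ φM) := by
  classical
  set P : Matrix (Fin r) (Fin r) R := Matrix.of fun i j => b.repr (φM (b j)) i with hPdef
  -- φM on basis vectors
  have hφMb : ∀ j, φM (b j) = ∑ i, P i j • b i := by
    intro j
    simpa [hPdef] using (b.sum_repr (φM (b j))).symm
  -- linearization on "column vectors"
  have hlinsum : ∀ c : Fin r → R,
      (linearization φ φM (∑ i, (show Twist R φ R from c i) ⊗ₜ[R] b i) : M)
        = ∑ k, P.mulVec c k • b k := by
    intro c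
    rw [map_sum]
    have h1 : ∀ i, (linearization φ φM ((show Twist R φ R from c i) ⊗ₜ[R] b i) : M)
        = c i • φM (b i) := fun i => rfl
    calc (∑ i, linearization φ φM ((show Twist R φ R from c i) ⊗ₜ[R] b i) : M)
        = ∑ i, c i • φM (b i) := Finset.sum_congr rfl fun i _ => h1 i
      _ = ∑ i, ∑ k, (P k i * c i) • b k := by
          refine Finset.sum_congr rfl fun i _ => ?_
          rw [hφMb i, Finset.smul_sum]
          refine Finset.sum_congr rfl fun k _ => ?_
          rw [smul_smul, mul_comm]
      _ = ∑ k, ∑ i, (P k i * c i) • b k := Finset.sum_comm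
      _ = ∑ k, P.mulVec c k • b k := by
          refine Finset.sum_congr rfl fun k _ => ?_
          rw [← Finset.sum_smul]
          rfl
  -- det P ≠ 0
  have hdet0 : P.det ≠ 0 := by
    intro h0
    obtain ⟨c, hc0, hcv⟩ := Matrix.exists_mulVec_eq_zero_iff.mpr h0
    have ht : linearization φ φM (∑ i, (show Twist R φ R from c i) ⊗ₜ[R] b i) = 0 := by
      have := hlinsum c
      rw [hcv] at this
      exact this.trans (by simp; rfl)
    have ht0 : (∑ i, (show Twist R φ R from c i) ⊗ₜ[R] b i
        : TensorProduct R (Twist R φ R) M) = 0 := by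
      apply hinj
      rw [ht, map_zero]
    obtain ⟨j, hj'⟩ := Function.ne_iff.mp hc0
    have hj : c j ≠ 0 := by simpa using hj'
    apply hj
    have hcoord := congrArg (coordLin φ b j) ht0
    rw [map_zero, map_sum] at hcoord
    have : (∑ i, coordLin φ b j ((show Twist R φ R from c i) ⊗ₜ[R] b i) : R) = c j := by
      calc (∑ i, coordLin φ b j ((show Twist R φ R from c i) ⊗ₜ[R] b i) : R)
          = ∑ i, c i * φ (b.repr (b i) j) := Finset.sum_congr rfl fun i _ => coordLin_tmul ..
        _ = c j := by
            simp [Module.Basis.repr_self, Finsupp.single_apply, apply_ite φ]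
    rw [← this]
    exact hcoord
  -- the G-action matrices
  set C : G → Matrix (Fin r) (Fin r) R := fun g => Matrix.of fun i j => b.repr (g • b j) i
    with hCdef
  have hCb : ∀ (g : G) j, (g • b j : M) = ∑ i, C g i j • b i := by
    intro g j
    simpa [hCdef] using (b.sum_repr (g • b j)).symm
  -- matrix relation  P * (C g).map φ = C g * P.map (g • ·)
  have hcoef : ∀ (g : G) k j,
      (∑ i, P k i * φ (C g i j)) = ∑ i, C g k i * (g • P i j) := by
    intro g k j
    have h1 : φM (g • b j) = ∑ k, (∑ i, P k i * φ (C g i j)) • b k := by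
      rw [hCb g j, map_sum]
      calc (∑ i, φM (C g i j • b i)) = ∑ i, ∑ k, (P k i * φ (C g i j)) • b k := by
            refine Finset.sum_congr rfl fun i _ => ?_
            rw [LinearMap.map_smulₛₗ, hφMb i, Finset.smul_sum]
            refine Finset.sum_congr rfl fun k _ => ?_
            rw [smul_smul, mul_comm]
        _ = ∑ k, ∑ i, (P k i * φ (C g i j)) • b k := Finset.sum_comm
        _ = ∑ k, (∑ i, P k i * φ (C g i j)) • b k := by
            refine Finset.sum_congr rfl fun k _ => (Finset.sum_smul).symm
    have h2 : (g • φM (b j) : M) = ∑ k, (∑ i, C g k i * (g • P i j)) • b k := by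
      rw [hφMb j, Finset.smul_sum]
      calc (∑ i, g • (P i j • b i) : M) = ∑ i, ∑ k, (C g k i * (g • P i j)) • b k := by
            refine Finset.sum_congr rfl fun i _ => ?_
            rw [hsemi, hCb g i, Finset.smul_sum]
            refine Finset.sum_congr rfl fun k _ => ?_
            rw [smul_smul, mul_comm]
        _ = ∑ k, ∑ i, (C g k i * (g • P i j)) • b k := Finset.sum_comm
        _ = ∑ k, (∑ i, C g k i * (g • P i j)) • b k := by
            refine Finset.sum_congr rfl fun k _ => (Finset.sum_smul).symm
    have h3 : (∑ k, (∑ i, P k i * φ (C g i j)) • b k : M)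
        = ∑ k, (∑ i, C g k i * (g • P i j)) • b k := by
      rw [← h1, ← h2, hcomm]
    have e1 := b.repr_sum_self (fun k => ∑ i, P k i * φ (C g i j))
    have e2 := b.repr_sum_self (fun k => ∑ i, C g k i * (g • P i j))
    have e3 : (fun k => ∑ i, P k i * φ (C g i j)) = (fun k => ∑ i, C g k i * (g • P i j)) := by
      rw [← e1, ← e2, h3]
    exact congrFun e3 k
  -- C g is invertible: C g * (C g⁻¹).map (g • ·) = 1
  have hCunit : ∀ g : G, IsUnit (C g).det := by
    intro g
    have hcoef2 : ∀ k j, (∑ i, C g k i * (g • C g⁻¹ i j)) = (1 : Matrix (Fin r) (Fin r) R) k j := by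
      intro k j
      have h4 : (b j : M) = ∑ k, (∑ i, C g k i * (g • C g⁻¹ i j)) • b k := by
        have : (b j : M) = g • (g⁻¹ • b j) := by rw [smul_inv_smul]
        rw [this, hCb g⁻¹ j, Finset.smul_sum]
        calc (∑ i, g • (C g⁻¹ i j • b i) : M)
            = ∑ i, ∑ k, (C g k i * (g • C g⁻¹ i j)) • b k := by
              refine Finset.sum_congr rfl fun i _ => ?_
              rw [hsemi, hCb g i, Finset.smul_sum]
              refine Finset.sum_congr rfl fun k _ => ?_
              rw [smul_smul, mul_comm]
          _ = ∑ k, ∑ i, (C g k i * (g • C g⁻¹ i j)) • b k := Finset.sum_comm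
          _ = ∑ k, (∑ i, C g k i * (g • C g⁻¹ i j)) • b k := by
              refine Finset.sum_congr rfl fun k _ => (Finset.sum_smul).symm
      have e1 := b.repr_sum_self (fun k => ∑ i, C g k i * (g • C g⁻¹ i j))
      have e4 : b.repr (b j) k = ∑ i, C g k i * (g • C g⁻¹ i j) := by
        rw [h4, e1]
      rw [← e4]
      simp [Module.Basis.repr_self, Finsupp.single_apply, Matrix.one_apply, eq_comm]
    have hmul : C g * (C g⁻¹).map (MulSemiringAction.toRingHom G R g) = 1 := by
      ext k j
      simpa [Matrix.mul_apply, Matrix.map_apply, MulSemiringAction.toRingHom_apply] using hcoef2 k j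
    have := congrArg Matrix.det hmul
    rw [Matrix.det_mul, Matrix.det_one] at this
    exact IsUnit.of_mul_eq_one _ this
  -- det relation:  det P * φ (det (C g)) = det (C g) * (g • det P)
  have hdetrel : ∀ g : G, P.det * φ (C g).det = (C g).det * (g • P.det) := by
    intro g
    have hmat : P * (C g).map φ = C g * P.map (MulSemiringAction.toRingHom G R g) := by
      ext k j
      simpa [Matrix.mul_apply, Matrix.map_apply, MulSemiringAction.toRingHom_apply] using hcoef g k j
    have hdm := congrArg Matrix.det hmat
    rw [Matrix.det_mul, Matrix.det_mul] at hdm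
    have hd1 : ((C g).map ⇑φ).det = φ (C g).det := ((RingHom.map_det φ (C g)).symm : _)
    have hd2 : (P.map ⇑(MulSemiringAction.toRingHom G R g)).det = g • P.det :=
      (((MulSemiringAction.toRingHom G R g).map_det P).symm : _)
    rw [hd1, hd2] at hdm
    exact hdm
  -- hence det P divides g • det P
  have hdvd : ∀ g : G, P.det ∣ (g • P.det) := by
    intro g
    obtain ⟨u, hu⟩ := hCunit g
    refine ⟨(↑u⁻¹ : R) * φ (C g).det, ?_⟩
    have huu : ((↑u : R) * (↑u⁻¹ : R)) = 1 := u.mul_inv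
    have h5 : (↑u : R) * (g • P.det) = (↑u : R) * (P.det * ((↑u⁻¹ : R) * φ (C g).det)) := by
      calc (↑u : R) * (g • P.det) = (C g).det * (g • P.det) := by rw [hu]
        _ = P.det * φ (C g).det := (hdetrel g).symm
        _ = (↑u : R) * (P.det * ((↑u⁻¹ : R) * φ (C g).det)) := by
            rw [show (↑u : R) * (P.det * ((↑u⁻¹ : R) * φ (C g).det))
                = ((↑u : R) * (↑u⁻¹ : R)) * (P.det * φ (C g).det) by ring, huu, one_mul]
    exact mul_left_cancel₀ u.ne_zero h5
  -- part 1: G-stability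
  have hstab : ∀ g : G, ∀ x ∈ Ideal.span {P.det}, g • x ∈ Ideal.span {P.det} := by
    intro g x hx
    rw [Ideal.mem_span_singleton] at hx ⊢
    obtain ⟨y, rfl⟩ := hx
    rw [smul_mul']
    exact Dvd.dvd.mul_right (hdvd g) _
  -- part 2: det P is a unit
  have hunit : IsUnit P.det := by
    have htop : Ideal.span {P.det} = ⊤ := by
      refine hGideal _ ⟨{P.det}, by simp⟩ hstab ?_
      rw [Ne, Ideal.span_singleton_eq_bot]
      exact hdet0
    exact Ideal.span_singleton_eq_top.mp htop
  refine ⟨hstab, hunit, hinj, ?_⟩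
  -- part 3: surjectivity
  intro m
  set v : Fin r → R := fun k => b.repr (show M from m) k with hv
  refine ⟨∑ i, (show Twist R φ R from P⁻¹.mulVec v i) ⊗ₜ[R] b i, ?_⟩
  have hPv : P.mulVec (P⁻¹.mulVec v) = v := by
    rw [Matrix.mulVec_mulVec, Matrix.mul_nonsing_inv P hunit, Matrix.one_mulVec]
  show (linearization φ φM (∑ i, (show Twist R φ R from P⁻¹.mulVec v i) ⊗ₜ[R] b i) : M)
      = (show M from m)
  rw [hlinsum, hPv]
  exact b.sum_repr (show M from m)
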